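/- A group G is isomorphic to the operator group of some kei if and only if G is generated by its involutions, i.e. G equals the subgroup generated by its elements of order dividing 2. -/

import Mathlib

/-- A rack: right multiplications are bijections, and self-distributivity holds. -/
def IsRack {X : Type*} (op : X → X → X) : Prop :=
  (∀ y : X, Function.Bijective fun x => op x y) ∧
  ∀ x y z : X, op (op x y) z = op (op x z) (op y z)

/-- A quandle is an idempotent rack. -/
def IsQuandle {X : Type*} (op : X → X → X) : Prop :=
  IsRack op ∧ ∀ x : X, op x x = x

/-- A kei is a quandle whose right multiplications are involutions. -/
def IsKei {X : Type*} (op : X → X → X) : Prop :=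
  IsQuandle op ∧ ∀ x y : X, op (op x y) y = x

/-- The operator group of a binary operation: the subgroup of `Equiv.Perm X` generated by
the permutations `x ↦ x ▷ y` for `y ∈ X`. -/
def OpGroup {X : Type*} (op : X → X → X) : Subgroup (Equiv.Perm X) :=
  Subgroup.closure {σ : Equiv.Perm X | ∃ y : X, ∀ x : X, σ x = op x y}

section Aux

variable {G : Type*} [Group G]

private lemma sq_one_cancel {x : G} (h : x ^ 2 = 1) : ∀ z : G, x * (x * z) = z := by
  intro z
  rw [← mul_assoc, ← pow_two, h, one_mul]

private lemma conj_sq_one (g x : G) (h : x ^ 2 = 1) : (g * x * g⁻¹) ^ 2 = 1 := by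
  rw [pow_two]
  simp [mul_assoc, sq_one_cancel h]

/-- The underlying set of the kei: involutions ⊕ the group. -/
abbrev KeiX (G : Type*) [Group G] : Type _ := {g : G // g ^ 2 = 1} ⊕ G

/-- The kei operation. -/
def keiOp (x y : KeiX G) : KeiX G :=
  match y with
  | Sum.inr _ => x
  | Sum.inl t =>
    match x with
    | Sum.inl a => Sum.inl ⟨t.1 * a.1 * t.1⁻¹, conj_sq_one t.1 a.1 a.2⟩
    | Sum.inr b => Sum.inr (b * t.1⁻¹)

/-- Conjugation permutation on involutions. -/
def conjPerm (g : G) : Equiv.Perm {x : G // x ^ 2 = 1} where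
  toFun a := ⟨g * a.1 * g⁻¹, conj_sq_one g a.1 a.2⟩
  invFun a := ⟨g⁻¹ * a.1 * g, by simpa using conj_sq_one g⁻¹ a.1 a.2⟩
  left_inv a := by ext; simp [mul_assoc]
  right_inv a := by ext; simp [mul_assoc]

/-- The permutation of `KeiX G` induced by `g : G`. -/
def keiPerm (g : G) : Equiv.Perm (KeiX G) :=
  Equiv.sumCongr (conjPerm g) (Equiv.mulRight g⁻¹)

/-- `keiPerm` as a monoid hom. -/
def keiHom : G →* Equiv.Perm (KeiX G) where
  toFun := keiPerm
  map_one' := by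
    ext x
    cases x with
    | inl a => simp [keiPerm, conjPerm]
    | inr b => simp [keiPerm]
  map_mul' g h := by
    ext x
    cases x with
    | inl a =>
      simp [keiPerm, conjPerm, Equiv.Perm.mul_apply, mul_assoc, mul_inv_rev]
    | inr b =>
      simp [keiPerm, Equiv.Perm.mul_apply, mul_assoc, mul_inv_rev]

lemma keiHom_injective : Function.Injective (keiHom (G := G)) := by
  intro g h hgh
  have := congrArg (fun σ => σ (Sum.inr (1 : G))) hgh
  simpa [keiHom, keiPerm] using this

lemma inv_eq_self_of_sq {t : G} (ht : t ^ 2 = 1) : t⁻¹ = t := by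
  rw [← mul_eq_one_iff_inv_eq, ← pow_two, ht]

lemma keiHom_apply_eq_op {t : G} (ht : t ^ 2 = 1) (x : KeiX G) :
    keiHom t x = keiOp x (Sum.inl ⟨t, ht⟩) := by
  cases x with
  | inl a => rfl
  | inr b => rfl

lemma isKei_keiOp : IsKei (keiOp (G := G)) := by
  have hinv : ∀ (y x : KeiX G), keiOp (keiOp x y) y = x := by
    rintro (⟨t, ht⟩ | g) (⟨a, ha⟩ | b)
    · simp only [keiOp]
      congr 1
      apply Subtype.ext
      have h1 : t⁻¹ = t := inv_eq_self_of_sq ht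
      have h2 : t * t = 1 := by rw [← pow_two]; exact ht
      simp [mul_assoc, h1, h2, sq_one_cancel ht]
    · simp only [keiOp]
      have h1 : t⁻¹ = t := inv_eq_self_of_sq ht
      have h2 : t * t = 1 := by rw [← pow_two]; exact ht
      simp [mul_assoc, h1, h2, sq_one_cancel ht]
    · rfl
    · rfl
  refine ⟨⟨⟨fun y => ?_, ?_⟩, ?_⟩, fun x y => hinv y x⟩
  · exact Function.Involutive.bijective (fun x => hinv y x)
  · rintro x (⟨t, ht⟩ | g) (⟨u, hu⟩ | h)
    · cases x with
      | inl a =>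
        simp only [keiOp]
        congr 1
        apply Subtype.ext
        simp [mul_assoc, mul_inv_rev]
      | inr b =>
        simp only [keiOp]
        simp [mul_assoc, mul_inv_rev]
    · rfl
    · cases x <;> rfl
    · rfl
  · rintro (⟨a, ha⟩ | b)
    · simp only [keiOp]
      congr 1
      apply Subtype.ext
      show a * a * a⁻¹ = a
      exact mul_inv_cancel_right a a
    · rfl

end Aux

/-- A group is isomorphic to the operator group of some kei if and only if it is
generated by its elements of order dividing `2`. -/
theorem opgroup_of_kei_iff_generated_by_involutions (G : Type u) [Group G] :
    (∃ (X : Type u) (op : X → X → X), IsKei op ∧ Nonempty (G ≃* OpGroup op)) ↔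
      Subgroup.closure {g : G | g ^ 2 = 1} = ⊤ := by
  constructor
  · rintro ⟨X, op, hkei, ⟨e⟩⟩
    rw [eq_top_iff]
    intro g _
    set S : Set (Equiv.Perm X) := {σ : Equiv.Perm X | ∃ y : X, ∀ x : X, σ x = op x y} with hS
    have hg : (e g : Equiv.Perm X) ∈ Subgroup.closure S := (e g).2
    have key : ∀ σ (hσ : σ ∈ Subgroup.closure S),
        e.symm ⟨σ, hσ⟩ ∈ Subgroup.closure {g : G | g ^ 2 = 1} := by
      intro σ hσ
      induction hσ using Subgroup.closure_induction with
      | mem σ hσm =>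
        apply Subgroup.subset_closure
        obtain ⟨y, hy⟩ := hσm
        have hσ2 : σ ^ 2 = 1 := by
          rw [pow_two]
          ext x
          rw [Equiv.Perm.mul_apply, hy (σ x), hy x, hkei.2, Equiv.Perm.one_apply]
        have : (⟨σ, Subgroup.subset_closure (by exact ⟨y, hy⟩)⟩ :
            Subgroup.closure S) ^ 2 = 1 := by
          apply Subtype.ext
          simpa using hσ2
        show e.symm _ ∈ {g : G | g ^ 2 = 1}
        simp only [Set.mem_setOf_eq, ← map_pow]
        erw [this, map_one]
      | one =>
        have : (⟨1, Subgroup.one_mem _⟩ : Subgroup.closure S) = 1 := rfl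
        erw [this, map_one]
        exact Subgroup.one_mem _
      | mul σ τ hσ' hτ' ihσ ihτ =>
        have : (⟨σ * τ, Subgroup.mul_mem _ hσ' hτ'⟩ : Subgroup.closure S)
            = ⟨σ, hσ'⟩ * ⟨τ, hτ'⟩ := rfl
        erw [this, map_mul]
        exact Subgroup.mul_mem _ ihσ ihτ
      | inv σ hσ' ihσ =>
        have : (⟨σ⁻¹, Subgroup.inv_mem _ hσ'⟩ : Subgroup.closure S)
            = (⟨σ, hσ'⟩ : Subgroup.closure S)⁻¹ := rfl
        erw [this, map_inv]
        exact Subgroup.inv_mem _ ihσ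
    have := key (e g) hg
    have h2 : (⟨(e g : Equiv.Perm X), hg⟩ : Subgroup.closure S) = e g := rfl
    erw [h2, e.symm_apply_apply] at this
    exact this
  · intro htop
    refine ⟨KeiX G, keiOp, isKei_keiOp, ⟨?_⟩⟩
    have hrange : (keiHom (G := G)).range = OpGroup (keiOp (G := G)) := by
      rw [MonoidHom.range_eq_map, ← htop, MonoidHom.map_closure]
      unfold OpGroup
      apply le_antisymm
      · apply Subgroup.closure_mono
        rintro σ ⟨t, ht, rfl⟩
        exact ⟨Sum.inl ⟨t, ht⟩, fun x => keiHom_apply_eq_op ht x⟩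
      · rw [Subgroup.closure_le]
        rintro σ ⟨y, hy⟩
        cases y with
        | inl t =>
          have : σ = keiHom (G := G) t.1 := by
            ext x
            rw [hy x, keiHom_apply_eq_op t.2 x]
          rw [this]
          exact Subgroup.subset_closure ⟨t.1, t.2, rfl⟩
        | inr g =>
          have : σ = 1 := by
            ext x
            rw [hy x]
            rfl
          rw [this]
          exact Subgroup.one_mem _
    exact (MonoidHom.ofInjective keiHom_injective).trans (MulEquiv.subgroupCongr hrange)
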